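/- arXiv:1306.5443 — 5 statements merged into one kernel-verified Lean document; each statement's English description precedes it below -/
import Mathlib

section
/- Let G be a finite group with commutator subgroup [G,G] cyclic of order p^k for a prime p, and let H be a subgroup of G. Then either H equals its normal closure H^G, or H is contained in a unique maximal subgroup of H^G. -/
open Subgroup
open scoped Pointwise commutatorElement

/-- In a finite cyclic group, a subgroup consists exactly of the elements killed by its order. -/
lemma aux_mem_iff_pow {C : Type*} [Group C] [Finite C] (hcyc : IsCyclic C)
    (B : Subgroup C) (x : C) : x ∈ B ↔ x ^ Nat.card B = 1 := by
  classical
  letI : Fintype C := Fintype.ofFinite C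
  have hn : 0 < Nat.card B := Nat.card_pos
  set n := Nat.card B with hndef
  set T : Set C := {x | x ^ n = 1} with hT
  have hBT : (B : Set C) ⊆ T := by
    intro y hy
    have hdvd : orderOf y ∣ n := Subgroup.orderOf_dvd_natCard B hy
    exact orderOf_dvd_iff_pow_eq_one.mp hdvd
  have hTcard : T.ncard ≤ n := by
    have h1 : T.ncard = T.toFinset.card := Set.ncard_eq_toFinset_card' T
    have h2 : T.toFinset = ({a : C | a ^ n = 1} : Finset C) := by
      ext a; simp [hT]
    rw [h1, h2]
    exact hcyc.card_pow_eq_one_le hn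
  have hBcard : (B : Set C).ncard = n := by
    rw [← Nat.card_coe_set_eq, hndef]
    rfl
  have hEq : (B : Set C) = T :=
    Set.eq_of_subset_of_ncard_le hBT (hBcard ▸ hTcard) (Set.toFinite T)
  constructor
  · intro hx; exact hBT hx
  · intro hx
    have : x ∈ T := hx
    rw [← hEq] at this
    exact this

/-- Subgroups of a finite cyclic `p`-group form a chain. -/
lemma aux_chain {C : Type*} [Group C] [Finite C] (hcyc : IsCyclic C) {p k : ℕ}
    (hp : p.Prime) (hcard : Nat.card C = p ^ k) (A B : Subgroup C) : A ≤ B ∨ B ≤ A := by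
  obtain ⟨a, _, ha⟩ := (Nat.dvd_prime_pow hp).mp (hcard ▸ Subgroup.card_subgroup_dvd_card A)
  obtain ⟨b, _, hb⟩ := (Nat.dvd_prime_pow hp).mp (hcard ▸ Subgroup.card_subgroup_dvd_card B)
  have key : ∀ (X Y : Subgroup C) (x y : ℕ), Nat.card X = p ^ x → Nat.card Y = p ^ y →
      x ≤ y → X ≤ Y := by
    intro X Y x y hX hY hxy z hz
    rw [aux_mem_iff_pow hcyc Y z, hY]
    have h1 : z ^ Nat.card X = 1 := (aux_mem_iff_pow hcyc X z).mp hz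
    rw [hX] at h1
    have : p ^ y = p ^ x * p ^ (y - x) := by
      rw [← pow_add, Nat.add_sub_cancel' hxy]
    rw [this, pow_mul, h1, one_pow]
  rcases le_total a b with h | h
  · exact Or.inl (key A B a b ha hb h)
  · exact Or.inr (key B A b a hb ha h)

theorem stmt_3 {G : Type*} [Group G] [Finite G] (p k : ℕ) (hp : p.Prime)
    (hcyc : IsCyclic (commutator G)) (hcard : Nat.card (commutator G) = p ^ k)
    (H : Subgroup G) :
    H = Subgroup.normalClosure (H : Set G) ∨
      ∃! M : Subgroup G, H ≤ M ∧ M < Subgroup.normalClosure (H : Set G) ∧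
        ∀ K : Subgroup G, M ≤ K → K < Subgroup.normalClosure (H : Set G) → K = M := by
  by_cases hHN : H = Subgroup.normalClosure (H : Set G)
  · exact Or.inl hHN
  right
  set N := Subgroup.normalClosure (H : Set G) with hNdef
  have hHle : H ≤ N := Subgroup.le_normalClosure
  -- H ⊔ commutator G is normal
  haveI hnorm : (H ⊔ commutator G).Normal := by
    constructor
    intro n hn g
    have h1 : ⁅g, n⁆ ∈ commutator G :=
      Subgroup.commutator_mem_commutator (Subgroup.mem_top g) (Subgroup.mem_top n)
    have h2 : g * n * g⁻¹ = ⁅g, n⁆ * n := by group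
    rw [h2]
    exact Subgroup.mul_mem _ (Subgroup.mem_sup_right h1) hn
  have hNle : N ≤ H ⊔ commutator G :=
    Subgroup.normalClosure_le_normal (fun x hx => Subgroup.mem_sup_left hx)
  -- decomposition of intermediate subgroups
  have hdec : ∀ K : Subgroup G, H ≤ K → K ≤ N → K = H ⊔ (K ⊓ commutator G) := by
    intro K hHK hKN
    refine le_antisymm ?_ (sup_le hHK inf_le_left)
    intro x hx
    have hx2 : x ∈ (H : Set G) * (commutator G : Set G) := by
      rw [← Subgroup.mul_normal H (commutator G)]
      exact hNle (hKN hx)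
    obtain ⟨h, hh, c, hc, rfl⟩ := hx2
    have hcK : c ∈ K := by
      have : h⁻¹ * (h * c) ∈ K := K.mul_mem (K.inv_mem (hHK hh)) hx
      simpa using this
    exact Subgroup.mul_mem _ (Subgroup.mem_sup_left hh)
      (Subgroup.mem_sup_right ⟨hcK, hc⟩)
  -- the interval [H, N] is a chain
  have hchain : ∀ K₁ K₂ : Subgroup G, H ≤ K₁ → K₁ ≤ N → H ≤ K₂ → K₂ ≤ N →
      K₁ ≤ K₂ ∨ K₂ ≤ K₁ := by
    intro K₁ K₂ h1 h1' h2 h2'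
    have hc := aux_chain hcyc hp hcard
      ((K₁ ⊓ commutator G).subgroupOf (commutator G))
      ((K₂ ⊓ commutator G).subgroupOf (commutator G))
    have lift : ∀ K K' : Subgroup G,
        (K ⊓ commutator G).subgroupOf (commutator G) ≤
          (K' ⊓ commutator G).subgroupOf (commutator G) →
        K ⊓ commutator G ≤ K' ⊓ commutator G := by
      intro K K' hle x hx
      have hxc : x ∈ commutator G := hx.2
      have : (⟨x, hxc⟩ : commutator G) ∈ (K ⊓ commutator G).subgroupOf (commutator G) :=
        Subgroup.mem_subgroupOf.mpr hx
      exact Subgroup.mem_subgroupOf.mp (hle this)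
    rcases hc with hc | hc
    · left
      rw [hdec K₁ h1 h1', hdec K₂ h2 h2']
      exact sup_le le_sup_left ((lift _ _ hc).trans le_sup_right)
    · right
      rw [hdec K₁ h1 h1', hdec K₂ h2 h2']
      exact sup_le le_sup_left ((lift _ _ hc).trans le_sup_right)
  -- find a maximal element of the interval
  set S : Set (Subgroup G) := {K | H ≤ K ∧ K < N} with hS
  have hHS : H ∈ S := ⟨le_rfl, lt_of_le_of_ne hHle hHN⟩
  obtain ⟨M, hMS, hMmax⟩ :=
    Set.Finite.exists_maximalFor id S (Set.toFinite S) ⟨H, hHS⟩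
  have hMmax' : ∀ K : Subgroup G, M ≤ K → K < N → K = M := by
    intro K hMK hKN
    exact le_antisymm (hMmax ⟨hMS.1.trans hMK, hKN⟩ hMK) hMK
  refine ⟨M, ⟨hMS.1, hMS.2, hMmax'⟩, ?_⟩
  rintro M' ⟨hHM', hM'N, hmax'⟩
  rcases hchain M' M hHM' hM'N.le hMS.1 hMS.2.le with h | h
  · exact (hmax' M h hMS.2).symm ▸ rfl
  · exact hMmax' M' h hM'N
end

section
/- If G is a finite group whose commutator subgroup [G,G] is cyclic, and S is a generating set of G, then [G,G] is generated by the set of commutators {[a,b] : a, b ∈ S}. -/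
theorem stmt_6 {G : Type*} [Group G] [Finite G] (S : Set G)
    (hS : Subgroup.closure S = ⊤) (hcyc : IsCyclic (commutator G)) :
    commutator G =
      Subgroup.closure {x : G | ∃ a ∈ S, ∃ b ∈ S, x = a⁻¹ * b⁻¹ * a * b} := by
  classical
  set T : Set G := {x : G | ∃ a ∈ S, ∃ b ∈ S, x = a⁻¹ * b⁻¹ * a * b} with hT
  set N : Subgroup G := Subgroup.closure T with hN
  -- N ≤ commutator G
  have hNC : N ≤ commutator G := by
    rw [hN, Subgroup.closure_le]
    rintro x ⟨a, -, b, -, rfl⟩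
    open scoped commutatorElement in
    have : a⁻¹ * b⁻¹ * a * b = ⁅a⁻¹, b⁻¹⁆ := by
      simp [commutatorElement_def, mul_assoc]
    rw [this, commutator_def]
    exact Subgroup.commutator_mem_commutator (Subgroup.mem_top _) (Subgroup.mem_top _)
  set C := commutator G with hC
  haveI : Fintype C := Fintype.ofFinite C
  set n : ℕ := Nat.card N with hn
  have hpow : ∀ a ∈ N, a ^ n = 1 := by
    intro a ha
    have h1 : (⟨a, ha⟩ : N) ^ n = 1 := pow_card_eq_one'
    have h2 := congrArg (Subgroup.subtype N) h1
    simpa using h2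
  -- the subgroup of C consisting of n-th roots of unity
  have hsub : ((N.subgroupOf C : Subgroup C) : Set C) = {x : C | x ^ n = 1} := by
    apply Set.eq_of_subset_of_ncard_le (ht := Set.toFinite _)
    · intro x hx
      have : (x : G) ∈ N := hx
      have h1 : (x : G) ^ n = 1 := hpow _ this
      show x ^ n = 1
      ext
      simpa using h1
    · have hcard1 : {x : C | x ^ n = 1}.ncard ≤ n := by
        have hn0 : 0 < n := Nat.card_pos
        have := IsCyclic.card_pow_eq_one_le (α := C) hn0
        rwa [Set.ncard_eq_toFinset_card' , Set.toFinset_setOf]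
      have hcard2 : ((N.subgroupOf C : Subgroup C) : Set C).ncard = n := by
        have h1 : Nat.card (N.subgroupOf C) = Nat.card N :=
          Nat.card_congr (Subgroup.subgroupOfEquivOfLe hNC).toEquiv
        rw [← Nat.card_coe_set_eq]
        exact h1
      omega
  -- N is normal
  haveI hNnorm : N.Normal := by
    constructor
    intro a ha g
    have haC : a ∈ C := hNC ha
    have hconjC : g * a * g⁻¹ ∈ C := (Subgroup.commutator_normal ⊤ ⊤).conj_mem a haC g
    set c : C := ⟨g * a * g⁻¹, hconjC⟩ with hc
    have hcn : c ^ n = 1 := by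
      ext
      show (g * a * g⁻¹) ^ n = 1
      rw [conj_pow, hpow a ha, mul_one, mul_inv_cancel]
    have : c ∈ ((N.subgroupOf C : Subgroup C) : Set C) := by
      rw [hsub]; exact hcn
    exact this
  -- the quotient G/N is abelian on generators, hence abelian
  have hcomm : ∀ x y : G ⧸ N, Commute x y := by
    intro x y
    have hgen : Subgroup.closure ((QuotientGroup.mk : G → G ⧸ N) '' S) = ⊤ := by
      have h1 : Subgroup.map (QuotientGroup.mk' N) (Subgroup.closure S) = ⊤ := by
        rw [hS]
        exact Subgroup.map_top_of_surjective _ (QuotientGroup.mk'_surjective N)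
      rw [MonoidHom.map_closure] at h1
      simpa [QuotientGroup.coe_mk'] using h1
    have hx : x ∈ Subgroup.closure ((QuotientGroup.mk : G → G ⧸ N) '' S) := by
      rw [hgen]; trivial
    have hy : y ∈ Subgroup.closure ((QuotientGroup.mk : G → G ⧸ N) '' S) := by
      rw [hgen]; trivial
    induction hx, hy using Subgroup.closure_induction₂ with
    | mem x y hx hy =>
      obtain ⟨a, haS, rfl⟩ := hx
      obtain ⟨b, hbS, rfl⟩ := hy
      have hmem : a⁻¹ * b⁻¹ * a * b ∈ N := Subgroup.subset_closure ⟨a, haS, b, hbS, rfl⟩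
      have h1 : (QuotientGroup.mk (a⁻¹ * b⁻¹ * a * b) : G ⧸ N) = 1 :=
        (QuotientGroup.eq_one_iff _).mpr hmem
      open scoped commutatorElement in
      have h2 : ⁅(QuotientGroup.mk a : G ⧸ N)⁻¹, (QuotientGroup.mk b : G ⧸ N)⁻¹⁆ = 1 := by
        rw [commutatorElement_def]
        simpa [mul_assoc] using h1
      have h3 := commutatorElement_eq_one_iff_commute.mp h2
      simpa using h3.inv_inv
    | one_left x hx => exact Commute.one_left x
    | one_right x hx => exact Commute.one_right x
    | mul_left x y z _ _ _ h1 h2 => exact h1.mul_left h2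
    | mul_right y z x _ _ _ h1 h2 => exact h1.mul_right h2
    | inv_left x y _ _ h => exact h.inv_left
    | inv_right x y _ _ h => exact h.inv_right
  refine le_antisymm ?_ hNC
  show commutator G ≤ N
  rw [commutator_def, Subgroup.commutator_le]
  intro a _ b _
  rw [← QuotientGroup.eq_one_iff, commutatorElement_def]
  have := hcomm (QuotientGroup.mk a : G ⧸ N) (QuotientGroup.mk b)
  have h := commutatorElement_eq_one_iff_commute.mpr this
  rw [commutatorElement_def] at h
  simpa using h
end

section
/- If G is a finite group whose commutator subgroup [G,G] is cyclic of prime power order p^k with k ≥ 1, and S generates G, then there exist a, b ∈ S such that the commutator [a,b] generates [G,G]. -/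
open scoped commutatorElement in
theorem stmt_7 {G : Type*} [Group G] [Finite G] (S : Set G)
    (hS : Subgroup.closure S = ⊤) (p k : ℕ) (hp : p.Prime) (hk : 1 ≤ k)
    (hcyc : IsCyclic (commutator G)) (hcard : Nat.card (commutator G) = p ^ k) :
    ∃ a ∈ S, ∃ b ∈ S, Subgroup.zpowers (a⁻¹ * b⁻¹ * a * b) = commutator G := by
  by_contra hcon
  push_neg at hcon
  set q := p ^ (k - 1) with hqdef
  letI : CommGroup (commutator G) := hcyc.commGroup
  have hcomm : ∀ x y : G, x ∈ commutator G → y ∈ commutator G → Commute x y := by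
    intro x y hx hy
    have : (⟨x, hx⟩ : commutator G) * ⟨y, hy⟩ = ⟨y, hy⟩ * ⟨x, hx⟩ := mul_comm _ _
    exact congrArg Subtype.val this
  -- the q-torsion subgroup of the commutator subgroup
  let N : Subgroup G :=
  { carrier := {x | x ∈ commutator G ∧ x ^ q = 1}
    one_mem' := ⟨one_mem _, one_pow q⟩
    mul_mem' := fun {x y} hx hy => ⟨mul_mem hx.1 hy.1, by
      rw [(hcomm x y hx.1 hy.1).mul_pow, hx.2, hy.2, one_mul]⟩
    inv_mem' := fun {x} hx => ⟨inv_mem hx.1, by rw [inv_pow, hx.2, inv_one]⟩ }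
  have hNmem : ∀ x : G, x ∈ N ↔ x ∈ commutator G ∧ x ^ q = 1 := fun _ => Iff.rfl
  have hN : N.Normal := by
    constructor
    intro n hn g
    refine ⟨(Subgroup.commutator_normal ⊤ ⊤).conj_mem n hn.1 g, ?_⟩
    rw [conj_pow, hn.2, mul_one, mul_inv_cancel]
  -- every commutator of generators lies in N
  have hmemN : ∀ a ∈ S, ∀ b ∈ S, a⁻¹ * b⁻¹ * a * b ∈ N := by
    intro a ha b hb
    have hmc : a⁻¹ * b⁻¹ * a * b ∈ commutator G := by
      have : ⁅a⁻¹, b⁻¹⁆ ∈ commutator G := by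
        rw [commutator_def]
        exact Subgroup.commutator_mem_commutator (Subgroup.mem_top _) (Subgroup.mem_top _)
      simpa [commutatorElement_def, mul_assoc] using this
    refine ⟨hmc, ?_⟩
    set m := a⁻¹ * b⁻¹ * a * b with hm
    have hdvd : orderOf m ∣ p ^ k := hcard ▸ (commutator G).orderOf_dvd_natCard hmc
    obtain ⟨i, hik, hi⟩ := (Nat.dvd_prime_pow hp).mp hdvd
    have hiklt : i < k := by
      rcases lt_or_eq_of_le hik with h | h
      · exact h
      · exfalso
        apply hcon a ha b hb
        apply Subgroup.eq_of_le_of_card_ge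
        · exact Subgroup.zpowers_le.mpr hmc
        · rw [Nat.card_zpowers, hi, h, hcard]
    have : orderOf m ∣ q := by
      rw [hi, hqdef]
      exact pow_dvd_pow p (by omega)
    exact orderOf_dvd_iff_pow_eq_one.mp this
  -- the quotient G/N is abelian, hence commutator G ≤ N
  letI := hN
  let φ := QuotientGroup.mk' N
  have hφsurj : Function.Surjective φ := QuotientGroup.mk'_surjective N
  have hclT : Subgroup.closure (φ '' S) = ⊤ := by
    rw [← MonoidHom.map_closure, hS, ← MonoidHom.range_eq_map,
      MonoidHom.range_eq_top_of_surjective _ hφsurj]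
  have hpair : ∀ u ∈ φ '' S, ∀ v ∈ φ '' S, Commute u v := by
    rintro u ⟨a, ha, rfl⟩ v ⟨b, hb, rfl⟩
    have h1 : ⁅(φ a)⁻¹, (φ b)⁻¹⁆ = 1 := by
      have := (QuotientGroup.eq_one_iff (a⁻¹ * b⁻¹ * a * b)).mpr (hmemN a ha b hb)
      simpa [φ, commutatorElement_def, mul_assoc] using this
    have := commutatorElement_eq_one_iff_commute.mp h1
    simpa using this.inv_inv
  have hcent : Subgroup.closure (φ '' S) ≤
      Subgroup.centralizer (Subgroup.closure (φ '' S) : Set (G ⧸ N)) := by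
    apply (Subgroup.closure_le _).mpr
    intro t ht
    rw [SetLike.mem_coe, Subgroup.mem_centralizer_iff]
    intro h hh
    have : Subgroup.closure (φ '' S) ≤ Subgroup.centralizer {t} := by
      apply (Subgroup.closure_le _).mpr
      intro u hu
      rw [SetLike.mem_coe, Subgroup.mem_centralizer_iff]
      intro x hx
      rw [Set.mem_singleton_iff] at hx
      subst hx
      exact hpair x ht u hu
    exact (Subgroup.mem_centralizer_iff.mp (this hh) t rfl).symm
  have habelian : ∀ x y : G ⧸ N, Commute x y := by
    intro x y
    have hx : x ∈ Subgroup.closure (φ '' S) := hclT ▸ Subgroup.mem_top x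
    have hy : y ∈ Subgroup.closure (φ '' S) := hclT ▸ Subgroup.mem_top y
    exact Subgroup.mem_centralizer_iff.mp (hcent hy) x hx
  have hle : commutator G ≤ N := by
    rw [commutator_def, Subgroup.commutator_le]
    intro g₁ _ g₂ _
    have h1 : φ ⁅g₁, g₂⁆ = 1 := by
      rw [map_commutatorElement]
      exact commutatorElement_eq_one_iff_commute.mpr (habelian _ _)
    exact (QuotientGroup.eq_one_iff _).mp h1
  -- but commutator G has an element of order p^k > p^(k-1)
  obtain ⟨g, hg⟩ := hcyc.exists_generator
  have hgtop : Subgroup.zpowers g = ⊤ := by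
    rw [eq_top_iff]; intro x _; exact hg x
  have hordg : orderOf (g : G) = p ^ k := by
    rw [Subgroup.orderOf_coe, ← Nat.card_zpowers, hgtop, Subgroup.card_top, hcard]
  have hgN : (g : G) ∈ N := hle g.2
  have : orderOf (g : G) ∣ q := orderOf_dvd_iff_pow_eq_one.mpr hgN.2
  rw [hordg, hqdef] at this
  have hlt : p ^ (k - 1) < p ^ k := Nat.pow_lt_pow_right hp.one_lt (by omega)
  exact absurd (Nat.le_of_dvd (Nat.pow_pos hp.pos) this) (not_le.mpr hlt)
end

section
/- Every connected Cayley digraph on a finite abelian group has a hamiltonian path. That is, if G is a finite abelian group and S ⊆ G generates G, then the digraph with vertex set G and edges g → g+s for s ∈ S has a hamiltonian path. -/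
/-- A hamiltonian path in the Cayley digraph of an additive group `G` with
connection set `S`: a list of all vertices, without repetition, in which each
vertex is followed by a vertex obtained by adding an element of `S`. -/
def IsAddHamiltonianPath {G : Type*} [AddGroup G] (S : Set G) (l : List G) : Prop :=
  l.Nodup ∧ (∀ g : G, g ∈ l) ∧ l.Chain' (fun x y => ∃ s ∈ S, y = x + s)

private lemma cayley_aux {G : Type*} [AddCommGroup G] [Finite G] (T : Finset G) :
    ∃ l : List G, l.Nodup ∧ (∀ g : G, g ∈ l ↔ g ∈ AddSubgroup.closure (T : Set G)) ∧
      l.Chain' (fun x y => ∃ s ∈ (T : Set G), y = x + s) := by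
  classical
  induction T using Finset.induction_on with
  | empty =>
    refine ⟨[0], List.nodup_singleton 0, ?_, List.isChain_singleton 0⟩
    intro g
    simp [AddSubgroup.mem_bot]
  | @insert s T hsT ih =>
    obtain ⟨l, hnd, hmem, hch⟩ := ih
    set H := AddSubgroup.closure (T : Set G) with hHdef
    have h0l : (0 : G) ∈ l := (hmem 0).2 H.zero_mem
    have hne : l ≠ [] := fun h => by simp [h] at h0l
    set a := l.head hne with ha
    set b := l.getLast hne with hb
    have haH : a ∈ H := (hmem a).1 (List.head_mem hne)
    have hbH : b ∈ H := (hmem b).1 (List.getLast_mem hne)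
    set sq : G ⧸ H := ((s : G) : G ⧸ H) with hsq
    set m := addOrderOf sq with hmdef
    have hm : 0 < m := addOrderOf_pos sq
    have hmem_s : ∀ k : ℤ, k • s ∈ H ↔ (m : ℤ) ∣ k := by
      intro k
      rw [← QuotientAddGroup.eq_zero_iff (k • s)]
      have hcast : ((k • s : G) : G ⧸ H) = k • sq := rfl
      rw [hcast, hmdef]
      exact addOrderOf_dvd_iff_zsmul_eq_zero.symm
    have hbaH : ∀ i : ℕ, i • (b - a) ∈ H := fun i =>
      AddSubgroup.nsmul_mem _ (AddSubgroup.sub_mem _ hbH haH) i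
    -- characterization of membership in the bigger subgroup
    have char : ∀ g : G, g ∈ AddSubgroup.closure (insert s (T : Set G)) ↔
        ∃ i, i < m ∧ ∃ h ∈ H, g = h + i • s := by
      intro g
      constructor
      · intro hg
        rw [← Set.singleton_union, AddSubgroup.closure_union, AddSubgroup.mem_sup] at hg
        obtain ⟨y, hy, z, hz, hyz⟩ := hg
        rw [AddSubgroup.mem_closure_singleton] at hy
        obtain ⟨n, rfl⟩ := hy
        have hm0 : (m : ℤ) ≠ 0 := by exact_mod_cast hm.ne'
        have h1 : 0 ≤ n % (m : ℤ) := Int.emod_nonneg n hm0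
        have h2 : n % (m : ℤ) < m := Int.emod_lt_of_pos n (by exact_mod_cast hm)
        refine ⟨(n % (m : ℤ)).toNat, by omega, (n - n % (m : ℤ)) • s + z, ?_, ?_⟩
        · refine AddSubgroup.add_mem _ ((hmem_s _).2 ⟨n / (m : ℤ), ?_⟩) hz
          have := Int.mul_ediv_add_emod n (m : ℤ)
          linarith
        · have hns : ((n % (m : ℤ)).toNat : ℕ) • s = (n % (m : ℤ)) • s := by
            rw [← natCast_zsmul, Int.toNat_of_nonneg h1]
          rw [← hyz, hns, add_right_comm, ← add_zsmul, sub_add_cancel]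
      · rintro ⟨i, _, h, hh, rfl⟩
        have hHle : H ≤ AddSubgroup.closure (insert s (T : Set G)) :=
          AddSubgroup.closure_mono (Set.subset_insert s _)
        exact AddSubgroup.add_mem _ (hHle hh)
          (AddSubgroup.nsmul_mem _ (AddSubgroup.subset_closure (Set.mem_insert s _)) i)
    -- distinct cosets
    have inj : ∀ i j : ℕ, i < m → j < m → ∀ x y : G, x ∈ H → y ∈ H →
        x + i • s = y + j • s → i = j := by
      intro i j hi hj x y hx hy hxy
      have hsub : ((i : ℤ) - j) • s ∈ H := by
        have heq : ((i : ℤ) - j) • s = y - x := by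
          rw [sub_zsmul, natCast_zsmul, natCast_zsmul]
          have heq2 : (i • s : G) + x = y + j • s := by rw [add_comm]; exact hxy
          rw [← sub_eq_add_neg]
          exact sub_eq_sub_iff_add_eq_add.mpr heq2
        rw [heq]
        exact AddSubgroup.sub_mem _ hy hx
      have hdvd := (hmem_s _).1 hsub
      have := Int.eq_zero_of_dvd_of_natAbs_lt_natAbs hdvd (by omega)
      omega
    set d := b - a + s with hd
    have hds : ∀ i : ℕ, i • d = i • (b - a) + i • s := fun i => by rw [hd, smul_add]
    refine ⟨(List.range m).flatMap (fun i => l.map (fun x => x + i • d)), ?_, ?_, ?_⟩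
    · rw [List.nodup_flatMap]
      constructor
      · intro i _
        exact hnd.map (add_left_injective (i • d))
      · refine (List.pairwise_lt_range (n := m)).imp_of_mem ?_
        intro i j hi hj hij
        rw [List.mem_range] at hi hj
        intro g hg1 hg2
        simp only [Function.onFun, List.mem_map] at hg1 hg2
        obtain ⟨x, hx, rfl⟩ := hg1
        obtain ⟨y, hy, hxy⟩ := hg2
        have hx' : x + i • d = (x + i • (b - a)) + i • s := by rw [hds]; abel
        have hy' : y + j • d = (y + j • (b - a)) + j • s := by rw [hds]; abel
        have : i = j := by
          refine inj i j hi hj (x + i • (b - a)) (y + j • (b - a))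
            (AddSubgroup.add_mem _ ((hmem x).1 hx) (hbaH i))
            (AddSubgroup.add_mem _ ((hmem y).1 hy) (hbaH j)) ?_
          rw [← hx', ← hy', hxy]
        omega
    · intro g
      rw [List.mem_flatMap, Finset.coe_insert, char g]
      constructor
      · rintro ⟨i, hi, hg⟩
        rw [List.mem_range] at hi
        rw [List.mem_map] at hg
        obtain ⟨x, hx, rfl⟩ := hg
        exact ⟨i, hi, x + i • (b - a),
          AddSubgroup.add_mem _ ((hmem x).1 hx) (hbaH i), by rw [hds]; abel⟩
      · rintro ⟨i, hi, h, hh, rfl⟩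
        refine ⟨i, List.mem_range.2 hi, List.mem_map.2 ⟨h - i • (b - a),
          (hmem _).2 (AddSubgroup.sub_mem _ hh (hbaH i)), by rw [hds]; abel⟩⟩
    · have hnomap : ([] : List G) ∉ (List.range m).map (fun i => l.map (fun x => x + i • d)) := by
        simp only [List.mem_map, not_exists]
        rintro i ⟨-, h⟩
        exact hne (List.map_eq_nil_iff.1 h)
      simp only [Finset.coe_insert]
      unfold List.Chain'
      rw [List.flatMap_def, List.isChain_flatten hnomap]
      constructor
      · intro l' hl'
        rw [List.mem_map] at hl'
        obtain ⟨i, -, rfl⟩ := hl'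
        rw [List.isChain_map]
        refine hch.imp ?_
        rintro x y ⟨t, ht, rfl⟩
        exact ⟨t, Set.mem_insert_iff.2 (Or.inr ht), by abel⟩
      · rw [List.isChain_map]
        have hmsucc : m = Nat.succ (m - 1) := by omega
        rw [hmsucc, List.isChain_range_succ]
        intro i _
        intro x hx y hy
        have hxe : x = b + i • d := by
          rw [List.getLast?_map, List.getLast?_eq_getLast (l := l) hne] at hx
          simp at hx
          first
          | exact hx
          | exact hx.symm
        have hye : y = a + (i + 1) • d := by
          rw [List.head?_map, List.head?_eq_head hne] at hy
          simp at hy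
          first
          | exact hy
          | exact hy.symm
        refine ⟨s, Set.mem_insert_iff.2 (Or.inl rfl), ?_⟩
        rw [hxe, hye, succ_nsmul, hd]
        abel

theorem stmt_13 {G : Type*} [AddCommGroup G] [Finite G] (S : Set G)
    (hS : AddSubgroup.closure S = ⊤) :
    ∃ l : List G, IsAddHamiltonianPath S l := by
  obtain ⟨l, hnd, hmem, hch⟩ := cayley_aux (G := G) (Set.Finite.toFinset (Set.toFinite S))
  have hcoe : ((Set.toFinite S).toFinset : Set G) = S := Set.Finite.coe_toFinset _
  refine ⟨l, hnd, fun g => (hmem g).2 ?_, hch.imp ?_⟩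
  · rw [hcoe, hS]; trivial
  · intro x y h
    rwa [hcoe] at h
end

section
/- (Factor Group Lemma) Let N be a cyclic normal subgroup of a finite group G, and let (s₁, …, s_d) be a sequence of elements of a generating set S such that the images of e, s₁, s₁s₂, …, s₁⋯s_{d−1} form a complete list of the cosets of N (each exactly once) and s₁s₂⋯s_d ∈ N. Then the walk obtained by repeating (s₁,…,s_d) exactly |N| times is a hamiltonian cycle in Cay(G;S) if and only if s₁s₂⋯s_d generates N. -/
private lemma take_flatten_prod {G : Type*} [Monoid G] (l : List G) :
    ∀ q m r, q < m → r ≤ l.length →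
      (((List.replicate m l).flatten).take (q * l.length + r)).prod
        = l.prod ^ q * (l.take r).prod := by
  intro q
  induction q with
  | zero =>
    intro m r hm hr
    obtain ⟨m, rfl⟩ : ∃ k, m = k + 1 := ⟨m - 1, by omega⟩
    rw [List.replicate_succ, List.flatten_cons]
    simp [List.take_append_of_le_length hr]
  | succ q ih =>
    intro m r hm hr
    obtain ⟨m, rfl⟩ : ∃ k, m = k + 1 := ⟨m - 1, by omega⟩
    rw [List.replicate_succ, List.flatten_cons]
    have h : (q + 1) * l.length + r = l.length + (q * l.length + r) := by ring
    rw [h, List.take_length_add_append, List.prod_append, ih m r (by omega) hr,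
      pow_succ', mul_assoc]

theorem stmt_18 {G : Type*} [Group G] [Finite G] (N : Subgroup G) [N.Normal]
    (hcyc : IsCyclic N) (S : Set G) (l : List G) (hlS : ∀ x ∈ l, x ∈ S)
    (hne : l ≠ [])
    -- the partial products `e, s₁, s₁s₂, …, s₁⋯s_{d-1}` hit each coset of `N`
    -- exactly once
    (hcover : ∀ q : G ⧸ N,
      ∃! i : Fin l.length, (QuotientGroup.mk ((l.take i).prod) : G ⧸ N) = q)
    (hprod : l.prod ∈ N) :
    -- the walk repeating `(s₁, …, s_d)` exactly `|N|` times is a hamiltonian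
    -- cycle iff `s₁s₂⋯s_d` generates `N`
    (((List.range ((List.replicate (Nat.card N) l).flatten.length)).map
        (fun i => ((List.replicate (Nat.card N) l).flatten.take i).prod)).Nodup ∧
      ∀ g : G, g ∈ (List.range ((List.replicate (Nat.card N) l).flatten.length)).map
        (fun i => ((List.replicate (Nat.card N) l).flatten.take i).prod)) ↔
      Subgroup.zpowers l.prod = N := by
  classical
  letI : Fintype G := Fintype.ofFinite G
  set d := l.length with hd
  have hd0 : 0 < d := List.length_pos_iff.mpr hne
  set n := Nat.card N with hn
  have hn0 : 0 < n := Nat.card_pos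
  set L := (List.replicate n l).flatten with hL
  have hLlen : L.length = n * d := by
    simp [hL, hd, List.length_flatten, List.map_replicate, List.sum_replicate, smul_eq_mul]
  set f : ℕ → G := fun i => (L.take i).prod with hf
  have hfeq : ∀ q r, q < n → r ≤ d → f (q * d + r) = l.prod ^ q * (l.take r).prod :=
    fun q r hq hr => take_flatten_prod l q n r hq hr
  have hcardQ : Nat.card (G ⧸ N) = d := by
    have hb : Function.Bijective
        (fun i : Fin l.length => (QuotientGroup.mk ((l.take i).prod) : G ⧸ N)) :=
      (Function.bijective_iff_existsUnique _).mpr hcover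
    simpa using (Nat.card_eq_of_bijective _ hb).symm
  have hcardG : Nat.card G = n * d := by
    rw [Subgroup.card_eq_card_quotient_mul_card_subgroup N, hcardQ, ← hn, mul_comm]
  constructor
  · rintro ⟨hnodup, -⟩
    -- `l.prod` has order at least `n`, since the partial products at multiples
    -- of `d` are distinct powers of `l.prod`
    have hop : 0 < orderOf l.prod := orderOf_pos l.prod
    have horder : n ≤ orderOf l.prod := by
      by_contra hlt
      push_neg at hlt
      have h1 : orderOf l.prod * d ∈ List.range L.length := by
        rw [List.mem_range, hLlen]
        exact (Nat.mul_lt_mul_right hd0).mpr hlt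
      have h0 : 0 ∈ List.range L.length := by
        rw [List.mem_range, hLlen]
        positivity
      have heq : f (orderOf l.prod * d) = f 0 := by
        have e1 := hfeq (orderOf l.prod) 0 hlt (Nat.zero_le _)
        simp only [Nat.add_zero, List.take_zero, List.prod_nil, mul_one] at e1
        have e0 : f 0 = 1 := by simp [hf]
        rw [e1, e0, pow_orderOf_eq_one]
      have := (List.nodup_map_iff_inj_on List.nodup_range).mp hnodup _ h1 _ h0 heq
      have : orderOf l.prod * d ≠ 0 := by positivity
      omega
    have hdvd : orderOf l.prod ∣ n := by
      have h := orderOf_dvd_natCard (⟨l.prod, hprod⟩ : N)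
      rwa [← Subgroup.orderOf_coe (⟨l.prod, hprod⟩ : N)] at h
    have hoeq : orderOf l.prod = n := le_antisymm (Nat.le_of_dvd hn0 hdvd) horder
    have hle : Subgroup.zpowers l.prod ≤ N := Subgroup.zpowers_le.mpr hprod
    have hcard : Nat.card (Subgroup.zpowers l.prod) = Nat.card N := by
      rw [Nat.card_zpowers, hoeq, hn]
    exact SetLike.coe_injective
      (Set.eq_of_subset_of_ncard_le hle hcard.ge (Set.toFinite _))
  · intro hgen
    have horder : orderOf l.prod = n := by
      rw [← Nat.card_zpowers, hgen]
    -- key injectivity statement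
    have hinj : ∀ i < n * d, ∀ j < n * d, f i = f j → i = j := by
      intro i hi j hj hij
      have hdi := Nat.div_add_mod i d
      have hdj := Nat.div_add_mod j d
      have hqi : i / d < n := (Nat.div_lt_iff_lt_mul hd0).mpr (by omega)
      have hqj : j / d < n := (Nat.div_lt_iff_lt_mul hd0).mpr (by omega)
      have hri : i % d < d := Nat.mod_lt _ hd0
      have hrj : j % d < d := Nat.mod_lt _ hd0
      have ei : f i = l.prod ^ (i / d) * (l.take (i % d)).prod := by
        conv_lhs => rw [show i = (i / d) * d + i % d from (Nat.div_add_mod' i d).symm]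
        exact hfeq _ _ hqi hri.le
      have ej : f j = l.prod ^ (j / d) * (l.take (j % d)).prod := by
        conv_lhs => rw [show j = (j / d) * d + j % d from (Nat.div_add_mod' j d).symm]
        exact hfeq _ _ hqj hrj.le
      rw [ei, ej] at hij
      -- pass to the quotient to identify the remainders
      have hP1 : (QuotientGroup.mk l.prod : G ⧸ N) = 1 :=
        (QuotientGroup.eq_one_iff _).mpr hprod
      have hq : (QuotientGroup.mk ((l.take (i % d)).prod) : G ⧸ N) =
          QuotientGroup.mk ((l.take (j % d)).prod) := by
        have := congrArg (QuotientGroup.mk (s := N)) hij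
        simpa [QuotientGroup.mk_mul, QuotientGroup.mk_pow, hP1] using this
      have hrij : (⟨i % d, hri⟩ : Fin l.length) = ⟨j % d, hrj⟩ := by
        obtain ⟨k, -, huniq⟩ := hcover (QuotientGroup.mk ((l.take (j % d)).prod))
        have h1 := huniq ⟨i % d, hri⟩ hq
        have h2 := huniq ⟨j % d, hrj⟩ rfl
        rw [h1, h2]
      have hrij' : i % d = j % d := congrArg Fin.val hrij
      rw [hrij'] at hij
      have hpow : l.prod ^ (i / d) = l.prod ^ (j / d) := mul_right_cancel hij
      have hdiv := pow_inj_mod.mp hpow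
      rw [horder, Nat.mod_eq_of_lt hqi, Nat.mod_eq_of_lt hqj] at hdiv
      calc i = d * (i / d) + i % d := hdi.symm
        _ = d * (j / d) + j % d := by rw [hdiv, hrij']
        _ = j := hdj
    have hnodup : ((List.range L.length).map f).Nodup := by
      rw [List.nodup_map_iff_inj_on List.nodup_range]
      intro x hx y hy hxy
      rw [List.mem_range, hLlen] at hx hy
      exact hinj x hx y hy hxy
    refine ⟨hnodup, ?_⟩
    intro g
    have hlen : ((List.range L.length).map f).length = Fintype.card G := by
      rw [List.length_map, List.length_range, hLlen, ← Nat.card_eq_fintype_card, hcardG]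
    have huniv : ((List.range L.length).map f).toFinset = Finset.univ :=
      Finset.eq_univ_of_card _ (by rw [List.toFinset_card_of_nodup hnodup, hlen])
    rw [← List.mem_toFinset, huniv]
    exact Finset.mem_univ g
end
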